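/- Geometric annulus lemma: let c ∈ ℝⁿ, 0 ≤ r ≤ R, and let θ, θ̂ ∈ ℝⁿ be such that the whole segment [θ, θ̂] is contained in the annulus {z : r ≤ ‖z − c‖ ≤ R} and θ̂ is a closest point of the segment to c. Then ‖θ − θ̂‖ ≤ √(R² − r²). -/

import Mathlib

open scoped BigOperators

/-- geometric annulus lemma. If the segment `[θ, θ̂]` lies in the
annulus `{z : r ≤ ‖z − c‖ ≤ R}` and `θ̂` is a closest point of the segment to `c`,
then `‖θ − θ̂‖ ≤ √(R² − r²)`. -/
theorem annulus_segment_bound {n : ℕ}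
    (c θ θh : EuclideanSpace ℝ (Fin n)) (r R : ℝ)
    (hr : 0 ≤ r) (hrR : r ≤ R)
    (hseg : ∀ t ∈ Set.Icc (0:ℝ) 1,
      r ≤ ‖(1 - t) • θ + t • θh - c‖ ∧ ‖(1 - t) • θ + t • θh - c‖ ≤ R)
    (hclosest : ∀ t ∈ Set.Icc (0:ℝ) 1,
      ‖θh - c‖ ≤ ‖(1 - t) • θ + t • θh - c‖) :
    ‖θ - θh‖ ≤ Real.sqrt (R^2 - r^2) := by
  set v : EuclideanSpace ℝ (Fin n) := θ - θh with hv
  set w : EuclideanSpace ℝ (Fin n) := θh - c with hw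
  have key : ∀ s ∈ Set.Icc (0:ℝ) 1, 0 ≤ s^2 * ‖v‖^2 + 2 * s * inner ℝ v w := by
    intro s hs
    have hs' : (1 - s) ∈ Set.Icc (0:ℝ) 1 := ⟨by linarith [hs.2], by linarith [hs.1]⟩
    have h1 := hclosest (1 - s) hs'
    have heq : (1 - (1 - s)) • θ + (1 - s) • θh - c = s • v + w := by
      simp only [hv, hw]
      module
    rw [heq] at h1
    have h2 : ‖w‖^2 ≤ ‖s • v + w‖^2 := by
      apply pow_le_pow_left₀ (norm_nonneg _) h1
    have h3 : ‖s • v + w‖^2 = s^2 * ‖v‖^2 + 2 * s * inner ℝ v w + ‖w‖^2 := by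
      rw [norm_add_sq_real, norm_smul, real_inner_smul_left, mul_pow, Real.norm_eq_abs, sq_abs]
      ring
    nlinarith [h2, h3]
  have hip : (0:ℝ) ≤ inner ℝ v w := by
    by_contra h
    push_neg at h
    have hvne : v ≠ 0 := by
      intro h0
      rw [h0] at h
      simp at h
    have hvn : 0 < ‖v‖ := norm_pos_iff.mpr hvne
    have hvpos : 0 < ‖v‖^2 := pow_pos hvn 2
    set s : ℝ := min 1 (-(inner ℝ v w) / ‖v‖^2) with hsdef
    have hspos : 0 < s := lt_min one_pos (div_pos (neg_pos.mpr h) hvpos)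
    have hs1 : s ≤ 1 := min_le_left _ _
    have hkey := key s ⟨le_of_lt hspos, hs1⟩
    have hsle : s * ‖v‖^2 ≤ -(inner ℝ v w) := by
      have := min_le_right 1 (-(inner ℝ v w) / ‖v‖^2)
      calc s * ‖v‖^2 ≤ (-(inner ℝ v w) / ‖v‖^2) * ‖v‖^2 := by
            apply mul_le_mul_of_nonneg_right this (le_of_lt hvpos)
        _ = -(inner ℝ v w) := by field_simp
    nlinarith [hkey, hsle, hspos]
  have h0 := hseg 0 ⟨le_refl 0, zero_le_one⟩
  have h1 := hseg 1 ⟨zero_le_one, le_refl 1⟩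
  have hθc : ‖θ - c‖ ≤ R := by simpa using h0.2
  have hθhc : r ≤ ‖θh - c‖ := by simpa using h1.1
  have hexp : ‖θ - c‖^2 = ‖v‖^2 + 2 * inner ℝ v w + ‖w‖^2 := by
    have heq : θ - c = v + w := by simp only [hv, hw]; abel
    rw [heq, norm_add_sq_real]
  have hle : ‖v‖^2 ≤ R^2 - r^2 := by
    have hR2 : ‖θ - c‖^2 ≤ R^2 :=
      pow_le_pow_left₀ (norm_nonneg _) hθc 2
    have hr2 : r^2 ≤ ‖w‖^2 := pow_le_pow_left₀ hr hθhc 2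
    nlinarith
  calc ‖v‖ = Real.sqrt (‖v‖^2) := by rw [Real.sqrt_sq (norm_nonneg _)]
    _ ≤ Real.sqrt (R^2 - r^2) := Real.sqrt_le_sqrt hle
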